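/- Let n ≥ 1 and let P = (Pⁱʲ) be a constant skew-symmetric n×n real matrix. For polynomials f, g in n variables define the Moyal product f⋆g := Σ_{k≥0} (ℏᵏ/k!) Σ P^{i₁j₁}⋯P^{iₖjₖ} (∂_{i₁}⋯∂_{iₖ} f)(∂_{j₁}⋯∂_{jₖ} g) in R[x₁,…,xₙ][ℏ]. Then ⋆ is associative: (f⋆g)⋆h = f⋆(g⋆h). -/

import Mathlib

open MvPolynomial PowerSeries

/-- Iterated partial derivative `∂_{v 0} ⋯ ∂_{v (k-1)}` of a polynomial. -/
noncomputable def pderivMulti {n k : ℕ} (v : Fin k → Fin n)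
    (f : MvPolynomial (Fin n) ℝ) : MvPolynomial (Fin n) ℝ :=
  (List.ofFn v).foldr (fun i acc => pderiv i acc) f

/-- The `k`-th term `(1/k!) Σ P^{i₁j₁}⋯P^{iₖjₖ} ∂_{i₁…iₖ}f · ∂_{j₁…jₖ}g`
of the Moyal product. -/
noncomputable def moyalTerm {n : ℕ} (P : Matrix (Fin n) (Fin n) ℝ) (k : ℕ)
    (f g : MvPolynomial (Fin n) ℝ) : MvPolynomial (Fin n) ℝ :=
  ((k.factorial : ℝ)⁻¹) •
    ∑ idx : Fin k → Fin n × Fin n,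
      (∏ a, P (idx a).1 (idx a).2) •
        (pderivMulti (fun a => (idx a).1) f * pderivMulti (fun a => (idx a).2) g)

/-- The Moyal star-product, extended ℏ-bilinearly to formal power series in ℏ
with polynomial coefficients. -/
noncomputable def moyalStar {n : ℕ} (P : Matrix (Fin n) (Fin n) ℝ)
    (F G : PowerSeries (MvPolynomial (Fin n) ℝ)) :
    PowerSeries (MvPolynomial (Fin n) ℝ) :=
  PowerSeries.mk fun m =>
    ∑ k ∈ Finset.range (m + 1), ∑ p ∈ Finset.HasAntidiagonal.antidiagonal (m - k),
      moyalTerm P k (PowerSeries.coeff p.1 F) (PowerSeries.coeff p.2 G)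

section Lemmas

variable {n : ℕ} (P : Matrix (Fin n) (Fin n) ℝ)

lemma pderivMulti_zero (v : Fin 0 → Fin n) (f : MvPolynomial (Fin n) ℝ) :
    pderivMulti v f = f := by
  simp [pderivMulti]

lemma pderivMulti_succ {k : ℕ} (v : Fin (k+1) → Fin n) (f : MvPolynomial (Fin n) ℝ) :
    pderivMulti v f = pderiv (v 0) (pderivMulti (v ∘ Fin.succ) f) := by
  simp only [pderivMulti, List.ofFn_succ, List.foldr_cons]
  rfl

lemma pderiv_comm' (i j : Fin n) (f : MvPolynomial (Fin n) ℝ) :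
    pderiv i (pderiv j f) = pderiv j (pderiv i f) := by
  induction f using MvPolynomial.induction_on with
  | C a => simp [pderiv_C]
  | add p q hp hq => simp [map_add, hp, hq]
  | mul_X p m hp =>
      simp only [pderiv_mul, map_add, pderiv_X, hp, Pi.single_apply]
      split_ifs <;> simp <;> ring

lemma pderivMulti_pderiv {k : ℕ} (v : Fin k → Fin n) (i : Fin n)
    (f : MvPolynomial (Fin n) ℝ) :
    pderivMulti v (pderiv i f) = pderiv i (pderivMulti v f) := by
  induction k with
  | zero => simp [pderivMulti_zero]
  | succ k ih =>
      simp only [pderivMulti_succ, ih, pderiv_comm']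

lemma pderivMulti_add {k : ℕ} (v : Fin k → Fin n) (f g : MvPolynomial (Fin n) ℝ) :
    pderivMulti v (f + g) = pderivMulti v f + pderivMulti v g := by
  induction k with
  | zero => simp [pderivMulti_zero]
  | succ k ih => simp [pderivMulti_succ, ih, map_add]

lemma pderivMulti_zero_poly {k : ℕ} (v : Fin k → Fin n) :
    pderivMulti v (0 : MvPolynomial (Fin n) ℝ) = 0 := by
  induction k with
  | zero => simp [pderivMulti_zero]
  | succ k ih => simp [pderivMulti_succ, ih]

lemma pderivMulti_smul {k : ℕ} (v : Fin k → Fin n) (r : ℝ) (f : MvPolynomial (Fin n) ℝ) :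
    pderivMulti v (r • f) = r • pderivMulti v f := by
  induction k with
  | zero => simp [pderivMulti_zero]
  | succ k ih => simp [pderivMulti_succ, ih]

lemma moyalTerm_zero (f g : MvPolynomial (Fin n) ℝ) :
    moyalTerm P 0 f g = f * g := by
  rw [moyalTerm]
  rw [Fintype.sum_unique]
  simp [pderivMulti_zero]

lemma moyalTerm_succ (k : ℕ) (f g : MvPolynomial (Fin n) ℝ) :
    moyalTerm P (k+1) f g
      = ((k+1 : ℝ))⁻¹ • ∑ p : Fin n × Fin n,
          P p.1 p.2 • moyalTerm P k (pderiv p.1 f) (pderiv p.2 g) := by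
  simp only [moyalTerm, Finset.smul_sum, smul_smul]
  rw [← (Fin.consEquiv (fun _ : Fin (k+1) => Fin n × Fin n)).sum_comp]
  rw [Fintype.sum_prod_type]
  refine Finset.sum_congr rfl fun p _ => ?_
  refine Finset.sum_congr rfl fun w _ => ?_
  simp only [Fin.consEquiv_apply]
  have h1 : pderivMulti (fun a => ((Fin.cons p w : Fin (k+1) → Fin n × Fin n) a).1) f
      = pderiv p.1 (pderivMulti (fun a => (w a).1) f) := by
    rw [pderivMulti_succ]
    simp [Function.comp_def]
  have h2 : pderivMulti (fun a => ((Fin.cons p w : Fin (k+1) → Fin n × Fin n) a).2) g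
      = pderiv p.2 (pderivMulti (fun a => (w a).2) g) := by
    rw [pderivMulti_succ]
    simp [Function.comp_def]
  rw [h1, h2, pderivMulti_pderiv, pderivMulti_pderiv]
  congr 1
  rw [Fin.prod_univ_succ]
  simp only [Fin.cons_zero, Fin.cons_succ]
  rw [Nat.factorial_succ]
  push_cast
  rw [show ((k:ℝ)+1) * (k.factorial:ℝ) = (1+(k:ℝ)) * k.factorial by ring, mul_inv]
  ring

lemma moyalTerm_add_left (k : ℕ) (f f' g : MvPolynomial (Fin n) ℝ) :
    moyalTerm P k (f + f') g = moyalTerm P k f g + moyalTerm P k f' g := by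
  simp [moyalTerm, pderivMulti_add, add_mul, smul_add, Finset.sum_add_distrib]

lemma moyalTerm_add_right (k : ℕ) (f g g' : MvPolynomial (Fin n) ℝ) :
    moyalTerm P k f (g + g') = moyalTerm P k f g + moyalTerm P k f g' := by
  simp [moyalTerm, pderivMulti_add, mul_add, smul_add, Finset.sum_add_distrib]

lemma moyalTerm_zero_left (k : ℕ) (g : MvPolynomial (Fin n) ℝ) :
    moyalTerm P k 0 g = 0 := by
  simp [moyalTerm, pderivMulti_zero_poly]

lemma moyalTerm_zero_right (k : ℕ) (f : MvPolynomial (Fin n) ℝ) :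
    moyalTerm P k f 0 = 0 := by
  simp [moyalTerm, pderivMulti_zero_poly]

lemma moyalTerm_C_mul_left (k : ℕ) (a : ℝ) (f g : MvPolynomial (Fin n) ℝ) :
    moyalTerm P k (MvPolynomial.C a * f) g = MvPolynomial.C a * moyalTerm P k f g := by
  induction k generalizing f g with
  | zero => rw [moyalTerm_zero, moyalTerm_zero, mul_assoc]
  | succ k ih =>
      rw [moyalTerm_succ, moyalTerm_succ]
      have : ∀ p : Fin n, pderiv p (MvPolynomial.C a * f) = MvPolynomial.C a * pderiv p f := by
        intro p; simp [pderiv_mul, pderiv_C]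
      simp only [this, ih, mul_smul_comm, Finset.mul_sum]

lemma moyalTerm_smul_left (k : ℕ) (r : ℝ) (f g : MvPolynomial (Fin n) ℝ) :
    moyalTerm P k (r • f) g = r • moyalTerm P k f g := by
  rw [MvPolynomial.smul_eq_C_mul, MvPolynomial.smul_eq_C_mul, moyalTerm_C_mul_left]

lemma moyalTerm_sum_left {ι : Type*} (s : Finset ι) (F : ι → MvPolynomial (Fin n) ℝ)
    (k : ℕ) (g : MvPolynomial (Fin n) ℝ) :
    moyalTerm P k (∑ j ∈ s, F j) g = ∑ j ∈ s, moyalTerm P k (F j) g := by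
  classical
  induction s using Finset.induction with
  | empty => simp [moyalTerm_zero_left]
  | insert _ _ hx ih =>
      rw [Finset.sum_insert hx, Finset.sum_insert hx, moyalTerm_add_left, ih]

lemma moyalTerm_pderiv (k : ℕ) (j : Fin n) (f g : MvPolynomial (Fin n) ℝ) :
    pderiv j (moyalTerm P k f g)
      = moyalTerm P k (pderiv j f) g + moyalTerm P k f (pderiv j g) := by
  simp only [moyalTerm, MvPolynomial.smul_eq_C_mul, pderiv_mul, pderiv_C, zero_mul, zero_add,
    map_sum, pderivMulti_pderiv, mul_add, Finset.sum_add_distrib, Finset.mul_sum]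

lemma moyalTerm_X_left (i : Fin n) (k : ℕ) (f g : MvPolynomial (Fin n) ℝ) :
    moyalTerm P (k+1) (X i * f) g
      = X i * moyalTerm P (k+1) f g
        + ∑ j, P i j • moyalTerm P k f (pderiv j g) := by
  have hderiv : ∀ (p1 : Fin n) (u : MvPolynomial (Fin n) ℝ),
      pderiv p1 (X i * u)
        = (if p1 = i then (1 : MvPolynomial (Fin n) ℝ) else 0) * u + X i * pderiv p1 u := by
    intro p1 u
    by_cases h : p1 = i
    · subst h
      rw [pderiv_mul, pderiv_X_self, if_pos rfl, one_mul]
    · simp [pderiv_mul, h, Pi.single_apply]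
  induction k generalizing f g with
  | zero =>
      rw [moyalTerm_succ, moyalTerm_succ]
      have hp : ∀ p : Fin n × Fin n,
          moyalTerm P 0 (pderiv p.1 (X i * f)) (pderiv p.2 g)
            = (if p.1 = i then (1:MvPolynomial (Fin n) ℝ) else 0) * (f * pderiv p.2 g)
              + X i * moyalTerm P 0 (pderiv p.1 f) (pderiv p.2 g) := by
        intro p
        rw [hderiv, moyalTerm_zero, moyalTerm_zero, add_mul, mul_assoc, mul_assoc]
      simp only [hp, smul_add, Finset.sum_add_distrib]
      have e1 : (∑ p : Fin n × Fin n,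
            P p.1 p.2 • ((if p.1 = i then (1:MvPolynomial (Fin n) ℝ) else 0) * (f * pderiv p.2 g)))
          = ∑ j, P i j • moyalTerm P 0 f (pderiv j g) := by
        rw [Fintype.sum_prod_type]
        rw [Finset.sum_eq_single i (fun b _ hb => by simp [hb])
          (fun h => absurd (Finset.mem_univ i) h)]
        refine Finset.sum_congr rfl fun j _ => ?_
        rw [moyalTerm_zero, if_pos rfl, one_mul]
      have e2 : (∑ p : Fin n × Fin n,
            P p.1 p.2 • (X i * moyalTerm P 0 (pderiv p.1 f) (pderiv p.2 g)))
          = X i * ∑ p : Fin n × Fin n,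
              P p.1 p.2 • moyalTerm P 0 (pderiv p.1 f) (pderiv p.2 g) := by
        rw [Finset.mul_sum]
        simp [mul_smul_comm]
      rw [e1, e2]
      norm_num
      rw [add_comm]
  | succ k ih =>
      have hsplit : ∀ p : Fin n × Fin n,
          moyalTerm P (k+1) (pderiv p.1 (X i * f)) (pderiv p.2 g)
            = (if p.1 = i then moyalTerm P (k+1) f (pderiv p.2 g) else 0)
              + (X i * moyalTerm P (k+1) (pderiv p.1 f) (pderiv p.2 g)
                 + ∑ l, P i l • moyalTerm P k (pderiv p.1 f) (pderiv l (pderiv p.2 g))) := by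
        intro p
        rw [hderiv, moyalTerm_add_left, ih]
        congr 1
        by_cases h : p.1 = i <;> simp [h, moyalTerm_zero_left]
      rw [moyalTerm_succ]
      simp only [hsplit, smul_add, Finset.sum_add_distrib]
      have eA : (∑ p : Fin n × Fin n,
            P p.1 p.2 • if p.1 = i then moyalTerm P (k+1) f (pderiv p.2 g) else 0)
          = ∑ j, P i j • moyalTerm P (k+1) f (pderiv j g) := by
        rw [Fintype.sum_prod_type]
        rw [Finset.sum_eq_single i (fun b _ hb => by simp [hb])
          (fun h => absurd (Finset.mem_univ i) h)]
        simp
      have eB : (∑ p : Fin n × Fin n,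
            P p.1 p.2 • (X i * moyalTerm P (k+1) (pderiv p.1 f) (pderiv p.2 g)))
          = X i * ∑ p : Fin n × Fin n,
              P p.1 p.2 • moyalTerm P (k+1) (pderiv p.1 f) (pderiv p.2 g) := by
        rw [Finset.mul_sum]
        simp [mul_smul_comm]
      have hk : ((k : ℝ) + 1) ≠ 0 := by positivity
      have eC : (∑ p : Fin n × Fin n,
            P p.1 p.2 • ∑ l, P i l • moyalTerm P k (pderiv p.1 f) (pderiv l (pderiv p.2 g)))
          = ((k : ℝ) + 1) • ∑ l, P i l • moyalTerm P (k+1) f (pderiv l g) := by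
        simp only [Finset.smul_sum]
        rw [Finset.sum_comm]
        refine Finset.sum_congr rfl fun l _ => ?_
        have hpc : ∀ p : Fin n × Fin n,
            P p.1 p.2 • P i l • moyalTerm P k (pderiv p.1 f) (pderiv l (pderiv p.2 g))
              = P i l • (P p.1 p.2 • moyalTerm P k (pderiv p.1 f) (pderiv p.2 (pderiv l g))) := by
          intro p
          rw [smul_comm, pderiv_comm']
        simp only [hpc]
        rw [← Finset.smul_sum]
        rw [smul_comm ((k:ℝ)+1) (P i l)]
        congr 1
        rw [moyalTerm_succ, smul_inv_smul₀ hk]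
      rw [eA, eB, eC]
      rw [moyalTerm_succ P (k+1) f g]
      rw [mul_smul_comm, smul_smul]
      rw [add_left_comm]
      congr 1
      rw [← add_smul]
      have h2 : ((k:ℝ) + 1 + 1)⁻¹ + ((k : ℝ) + 1 + 1)⁻¹ * ((k:ℝ)+1) = 1 := by
        have h3 : ((k : ℝ) + 1 + 1) ≠ 0 := by positivity
        field_simp
        ring
      push_cast
      rw [h2, one_smul]

/-- Remainder term in the Leibniz-type rule for `moyalTerm` against `X i * f`. -/
noncomputable def moyalE {n : ℕ} (P : Matrix (Fin n) (Fin n) ℝ) (i : Fin n) :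
    ℕ → MvPolynomial (Fin n) ℝ → MvPolynomial (Fin n) ℝ → MvPolynomial (Fin n) ℝ
  | 0, _, _ => 0
  | (l+1), f, g => ∑ j, P i j • moyalTerm P l f (pderiv j g)

lemma moyalE_zero (i : Fin n) (f g : MvPolynomial (Fin n) ℝ) : moyalE P i 0 f g = 0 := rfl

lemma moyalE_succ (i : Fin n) (l : ℕ) (f g : MvPolynomial (Fin n) ℝ) :
    moyalE P i (l+1) f g = ∑ j, P i j • moyalTerm P l f (pderiv j g) := rfl

lemma moyalTerm_X_left' (i : Fin n) (l : ℕ) (f g : MvPolynomial (Fin n) ℝ) :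
    moyalTerm P l (X i * f) g = X i * moyalTerm P l f g + moyalE P i l f g := by
  cases l with
  | zero => rw [moyalTerm_zero, moyalTerm_zero, moyalE_zero, add_zero, mul_assoc]
  | succ l => rw [moyalTerm_X_left, moyalE_succ]

lemma moyal_assoc_sum (f : MvPolynomial (Fin n) ℝ) :
    ∀ (m : ℕ) (g h : MvPolynomial (Fin n) ℝ),
      ∑ k ∈ Finset.range (m+1), moyalTerm P k (moyalTerm P (m-k) f g) h
        = ∑ k ∈ Finset.range (m+1), moyalTerm P k f (moyalTerm P (m-k) g h) := by
  induction f using MvPolynomial.induction_on with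
  | C a =>
      intro m g h
      rw [Finset.sum_eq_single m (fun k _ hk => ?_)
        (fun hm => absurd (Finset.self_mem_range_succ m) hm),
        Finset.sum_eq_single 0 (fun k hk hk0 => ?_) (fun h0 => absurd (by simp) h0)]
      · rw [Nat.sub_self, moyalTerm_zero, moyalTerm_C_mul_left, Nat.sub_zero, moyalTerm_zero]
      · -- k ≠ 0 : moyalTerm P k (C a) _ = 0
        obtain ⟨d, rfl⟩ := Nat.exists_eq_succ_of_ne_zero hk0
        rw [moyalTerm_succ]
        simp [pderiv_C, moyalTerm_zero_left]
      · -- k ≠ m in LHS : inner vanishes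
        have hklt : k < m := by
          have := Finset.mem_range.mp ‹k ∈ Finset.range (m+1)›
          omega
        obtain ⟨d, hd⟩ : ∃ d, m - k = d + 1 := ⟨m - k - 1, by omega⟩
        rw [hd, moyalTerm_succ]
        simp [pderiv_C, moyalTerm_zero_left]
  | add p q hp hq =>
      intro m g h
      simp only [moyalTerm_add_left, Finset.sum_add_distrib, hp, hq]
  | mul_X p i hp =>
      intro m g h
      rw [mul_comm p (X i)]
      cases m with
      | zero =>
          simp [moyalTerm_zero, mul_assoc]
      | succ m =>
          -- abbreviations
          have key : ∀ (k : ℕ) (u v : MvPolynomial (Fin n) ℝ),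
              moyalTerm P k (X i * u) v
                = X i * moyalTerm P k u v + moyalE P i k u v := moyalTerm_X_left' P i
          -- LHS transformation
          have hL :
              ∑ k ∈ Finset.range (m+2), moyalTerm P k (moyalTerm P (m+1-k) (X i * p) g) h
                = X i * ∑ k ∈ Finset.range (m+2),
                    moyalTerm P k (moyalTerm P (m+1-k) p g) h
                  + (∑ k ∈ Finset.range (m+2), moyalE P i k (moyalTerm P (m+1-k) p g) h
                     + ∑ k ∈ Finset.range (m+2),
                         moyalTerm P k (moyalE P i (m+1-k) p g) h) := by
            rw [Finset.mul_sum, ← Finset.sum_add_distrib, ← Finset.sum_add_distrib]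
            refine Finset.sum_congr rfl fun k _ => ?_
            rw [key, moyalTerm_add_left, key, add_assoc]
          -- RHS transformation
          have hR :
              ∑ k ∈ Finset.range (m+2), moyalTerm P k (X i * p) (moyalTerm P (m+1-k) g h)
                = X i * ∑ k ∈ Finset.range (m+2),
                    moyalTerm P k p (moyalTerm P (m+1-k) g h)
                  + ∑ k ∈ Finset.range (m+2), moyalE P i k p (moyalTerm P (m+1-k) g h) := by
            rw [Finset.mul_sum, ← Finset.sum_add_distrib]
            exact Finset.sum_congr rfl fun k _ => key k p _
          rw [hL, hR, hp]
          congr 1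
          -- the two remainder sums
          have hS2 :
              ∑ k ∈ Finset.range (m+2), moyalE P i k (moyalTerm P (m+1-k) p g) h
                = ∑ j, P i j •
                    ∑ k ∈ Finset.range (m+1),
                      moyalTerm P k p (moyalTerm P (m-k) g (pderiv j h)) := by
            rw [Finset.sum_range_succ']
            simp only [moyalE_zero, add_zero, moyalE_succ, Nat.succ_sub_succ]
            rw [Finset.sum_comm]
            refine Finset.sum_congr rfl fun j _ => ?_
            rw [← Finset.smul_sum, hp m g (pderiv j h)]
          have hS3 :
              ∑ k ∈ Finset.range (m+2), moyalTerm P k (moyalE P i (m+1-k) p g) h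
                = ∑ j, P i j •
                    ∑ k ∈ Finset.range (m+1),
                      moyalTerm P k p (moyalTerm P (m-k) (pderiv j g) h) := by
            rw [Finset.sum_range_succ, Nat.sub_self, moyalE_zero, moyalTerm_zero_left, add_zero]
            have : ∀ k ∈ Finset.range (m+1),
                moyalTerm P k (moyalE P i (m+1-k) p g) h
                  = ∑ j, P i j • moyalTerm P k (moyalTerm P (m-k) p (pderiv j g)) h := by
              intro k hk
              have hk' : m + 1 - k = (m - k) + 1 := by
                have := Finset.mem_range.mp hk; omega
              rw [hk', moyalE_succ, moyalTerm_sum_left]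
              exact Finset.sum_congr rfl fun j _ => by rw [moyalTerm_smul_left]
            rw [Finset.sum_congr rfl this, Finset.sum_comm]
            refine Finset.sum_congr rfl fun j _ => ?_
            rw [← Finset.smul_sum, hp m (pderiv j g) h]
          have hS4 :
              ∑ k ∈ Finset.range (m+2), moyalE P i k p (moyalTerm P (m+1-k) g h)
                = ∑ j, P i j •
                    (∑ k ∈ Finset.range (m+1),
                        moyalTerm P k p (moyalTerm P (m-k) (pderiv j g) h)
                     + ∑ k ∈ Finset.range (m+1),
                        moyalTerm P k p (moyalTerm P (m-k) g (pderiv j h))) := by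
            rw [Finset.sum_range_succ']
            simp only [moyalE_zero, add_zero, moyalE_succ, Nat.succ_sub_succ]
            rw [Finset.sum_comm]
            refine Finset.sum_congr rfl fun j _ => ?_
            rw [← Finset.smul_sum]
            refine congrArg (P i j • ·) ?_
            rw [← Finset.sum_add_distrib]
            refine Finset.sum_congr rfl fun k _ => ?_
            rw [moyalTerm_pderiv, moyalTerm_add_right]
          rw [hS2, hS3, hS4, ← Finset.sum_add_distrib]
          refine Finset.sum_congr rfl fun j _ => ?_
          rw [← smul_add, add_comm]

lemma moyalStar_CC (f g : MvPolynomial (Fin n) ℝ) :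
    moyalStar P (PowerSeries.C f) (PowerSeries.C g)
      = PowerSeries.mk (fun m => moyalTerm P m f g) := by
  refine PowerSeries.ext fun m => ?_
  rw [moyalStar, coeff_mk, coeff_mk]
  have hinner : ∀ (k d : ℕ),
      ∑ p ∈ Finset.HasAntidiagonal.antidiagonal d,
          moyalTerm P k (PowerSeries.coeff p.1 (PowerSeries.C f))
            (PowerSeries.coeff p.2 (PowerSeries.C g))
        = if d = 0 then moyalTerm P k f g else 0 := by
    intro k d
    cases d with
    | zero => simp [PowerSeries.coeff_C]
    | succ d =>
        rw [if_neg (Nat.succ_ne_zero d)]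
        refine Finset.sum_eq_zero fun p hp => ?_
        rw [Finset.HasAntidiagonal.mem_antidiagonal] at hp
        by_cases h1 : p.1 = 0
        · have h2 : p.2 ≠ 0 := by omega
          simp [PowerSeries.coeff_C, h2, moyalTerm_zero_right]
        · simp [PowerSeries.coeff_C, h1, moyalTerm_zero_left]
  simp only [hinner]
  rw [Finset.sum_eq_single m (fun k hk hkm => ?_)
    (fun hm => absurd (Finset.self_mem_range_succ m) hm)]
  · rw [Nat.sub_self, if_pos rfl]
  · rw [if_neg]
    have := Finset.mem_range.mp hk
    omega

lemma moyalStar_mk_C (A : ℕ → MvPolynomial (Fin n) ℝ) (h : MvPolynomial (Fin n) ℝ) :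
    moyalStar P (PowerSeries.mk A) (PowerSeries.C h)
      = PowerSeries.mk (fun m =>
          ∑ k ∈ Finset.range (m+1), moyalTerm P k (A (m-k)) h) := by
  refine PowerSeries.ext fun m => ?_
  rw [moyalStar, coeff_mk, coeff_mk]
  refine Finset.sum_congr rfl fun k _ => ?_
  refine (Finset.sum_eq_single_of_mem ((m-k), 0) (by simp) (fun p hp hp' => ?_)).trans ?_
  · rw [Finset.HasAntidiagonal.mem_antidiagonal] at hp
    have h2 : p.2 ≠ 0 := by
      rcases p with ⟨p1, p2⟩
      intro hz
      apply hp'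
      have h3 : p2 = 0 := hz
      have h4 : p1 = m - k := by omega
      simp [h3, h4]
    simp [PowerSeries.coeff_C, h2, moyalTerm_zero_right]
  · simp [PowerSeries.coeff_C, coeff_mk]

lemma moyalStar_C_mk (f : MvPolynomial (Fin n) ℝ) (A : ℕ → MvPolynomial (Fin n) ℝ) :
    moyalStar P (PowerSeries.C f) (PowerSeries.mk A)
      = PowerSeries.mk (fun m =>
          ∑ k ∈ Finset.range (m+1), moyalTerm P k f (A (m-k))) := by
  refine PowerSeries.ext fun m => ?_
  rw [moyalStar, coeff_mk, coeff_mk]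
  refine Finset.sum_congr rfl fun k _ => ?_
  refine (Finset.sum_eq_single_of_mem (0, (m-k)) (by simp) (fun p hp hp' => ?_)).trans ?_
  · rw [Finset.HasAntidiagonal.mem_antidiagonal] at hp
    have h1 : p.1 ≠ 0 := by
      rcases p with ⟨p1, p2⟩
      intro hz
      apply hp'
      have h3 : p1 = 0 := hz
      have h4 : p2 = m - k := by omega
      simp [h3, h4]
    simp [PowerSeries.coeff_C, h1, moyalTerm_zero_left]
  · simp [PowerSeries.coeff_C, coeff_mk]

end Lemmas

/-- The Moyal product associated with a constant skew-symmetric matrix `P`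
is associative on polynomials. -/
theorem moyal_associative {n : ℕ} (hn : 1 ≤ n)
    (P : Matrix (Fin n) (Fin n) ℝ) (hskew : ∀ i j, P i j = - P j i)
    (f g h : MvPolynomial (Fin n) ℝ) :
    moyalStar P (moyalStar P (PowerSeries.C f) (PowerSeries.C g))
        (PowerSeries.C h)
      = moyalStar P (PowerSeries.C f)
          (moyalStar P (PowerSeries.C g) (PowerSeries.C h)) := by
  rw [moyalStar_CC, moyalStar_CC, moyalStar_mk_C, moyalStar_C_mk]
  exact congrArg PowerSeries.mk (funext fun m => moyal_assoc_sum P f m g h)
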